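/- Let σ, ω, ϑ be integers with σ, ϑ not divisible by 3, let η ≥ 1, γ = σϑ, and suppose 3 divides 2σ − ω. Define m(x,y) = (1/3)(1 + e^{2πi σ x} + e^{2πi (ω x + 3^η ϑ y)}). Then for every pair of integers ℓ1, ℓ2 with 3 ∤ ℓ1, the point (ℓ1/3, ℓ2/3^η) is a zero of m. -/

import Mathlib

open Complex Real

theorem stmt_4 (σ ω ϑ γ : ℤ) (η : ℕ) (hη : 1 ≤ η)
    (hσ3 : ¬ (3 : ℤ) ∣ σ) (hϑ3 : ¬ (3 : ℤ) ∣ ϑ)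
    (hγ : γ = σ * ϑ)
    (hdiv : (3 : ℤ) ∣ 2 * σ - ω)
    (m : ℝ → ℝ → ℂ)
    (hm : ∀ x y : ℝ, m x y = (1/3) * (1 + Complex.exp (2 * Real.pi * Complex.I * (σ * x))
      + Complex.exp (2 * Real.pi * Complex.I * (ω * x + 3 ^ η * ϑ * y))))
    (ℓ1 ℓ2 : ℤ) (hℓ1 : ¬ (3 : ℤ) ∣ ℓ1) :
    m ((ℓ1 : ℝ) / 3) ((ℓ2 : ℝ) / 3 ^ η) = 0 := by
  obtain ⟨k, hk⟩ := hdiv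
  have hω : (ω : ℂ) = 2 * σ - 3 * k := by
    have h : (ω : ℤ) = 2 * σ - 3 * k := by linarith
    exact_mod_cast congrArg (Int.cast : ℤ → ℂ) h
  set ζ : ℂ := Complex.exp (2 * Real.pi * Complex.I * ((σ : ℂ) * (((ℓ1 : ℝ) / 3 : ℝ) : ℂ))) with hζ
  have h2 : Complex.exp (2 * Real.pi * Complex.I *
      ((ω : ℂ) * (((ℓ1 : ℝ) / 3 : ℝ) : ℂ) + (3 : ℂ) ^ η * (ϑ : ℂ) * (((ℓ2 : ℝ) / 3 ^ η : ℝ) : ℂ)))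
      = ζ ^ 2 := by
    have harg : (2 * Real.pi * Complex.I *
        ((ω : ℂ) * (((ℓ1 : ℝ) / 3 : ℝ) : ℂ) + (3 : ℂ) ^ η * (ϑ : ℂ) * (((ℓ2 : ℝ) / 3 ^ η : ℝ) : ℂ)))
        = (2 : ℕ) * (2 * Real.pi * Complex.I * ((σ : ℂ) * (((ℓ1 : ℝ) / 3 : ℝ) : ℂ)))
          + (((-k) * ℓ1 + ϑ * ℓ2 : ℤ) : ℂ) * (2 * Real.pi * Complex.I) := by
      push_cast
      rw [hω]
      have h3 : (3 : ℂ) ≠ 0 := by norm_num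
      have hp : ((3 : ℂ) ^ η) ≠ 0 := pow_ne_zero _ h3
      field_simp
      ring
    rw [harg, Complex.exp_add, Complex.exp_int_mul_two_pi_mul_I, mul_one,
      Complex.exp_nat_mul]
  have hζ3 : ζ ^ 3 = 1 := by
    rw [hζ, ← Complex.exp_nat_mul]
    have h : ((3 : ℕ) : ℂ) * (2 * Real.pi * Complex.I * ((σ : ℂ) * (((ℓ1 : ℝ) / 3 : ℝ) : ℂ)))
        = ((σ * ℓ1 : ℤ) : ℂ) * (2 * Real.pi * Complex.I) := by
      push_cast
      field_simp
    rw [h, Complex.exp_int_mul_two_pi_mul_I]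
  have hζ1 : ζ ≠ 1 := by
    intro h
    rw [hζ, Complex.exp_eq_one_iff] at h
    obtain ⟨n, hn⟩ := h
    have hpi : (2 * (Real.pi : ℂ) * Complex.I) ≠ 0 := by
      simp [Real.pi_ne_zero, Complex.I_ne_zero]
    have h3 : (σ : ℂ) * (((ℓ1 : ℝ) / 3 : ℝ) : ℂ) = n :=
      mul_left_cancel₀ hpi (by rw [hn]; ring)
    have h4 : ((σ * ℓ1 : ℤ) : ℂ) = ((3 * n : ℤ) : ℂ) := by
      push_cast at h3 ⊢
      field_simp at h3
      linear_combination h3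
    have hd : (3 : ℤ) ∣ σ * ℓ1 := ⟨n, by exact_mod_cast h4⟩
    rcases (Int.prime_three.2.2 _ _ hd) with h | h
    · exact hσ3 h
    · exact hℓ1 h
  have hsum : 1 + ζ + ζ ^ 2 = 0 := by
    have hfac : (ζ - 1) * (1 + ζ + ζ ^ 2) = ζ ^ 3 - 1 := by ring
    rw [hζ3, sub_self] at hfac
    rcases mul_eq_zero.mp hfac with h | h
    · exact absurd (sub_eq_zero.mp h) hζ1
    · exact h
  rw [hm, h2, ← hζ]
  linear_combination (1/3 : ℂ) * hsum
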